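/- Let G be a connected finite simple graph, and for U ⊆ V(G) let G_U be the graph with vertices (v,S) where v ∈ V(G), S ⊆ E(v), and |S| ≡ |{v} ∩ U| mod 2, with (v,S) adjacent to (u,T) iff uv ∈ E(G) and uv ∉ S △ T. If U, U' ⊆ V(G) satisfy |U| ≡ |U'| mod 2, then G_U ≅ G_{U'}. -/

import Mathlib

open SimpleGraph

variable {V : Type}

/-- Vertices of the parity construction `G_U`: pairs `(v, S)` with `S` a set of edges
incident to `v` whose cardinality has the parity of `|{v} ∩ U|`. -/
def ParityVert (G : SimpleGraph V) (U : Set V) : Type :=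
  {p : V × Set (Sym2 V) //
    p.2 ⊆ G.incidenceSet p.1 ∧ p.2.ncard % 2 = ({p.1} ∩ U : Set V).ncard % 2}

/-- The parity construction `G_U`: `(v,S)` is adjacent to `(u,T)` iff `uv ∈ E(G)` and
`uv ∉ S △ T`. -/
def parityGraph (G : SimpleGraph V) (U : Set V) : SimpleGraph (ParityVert G U) where
  Adj x y := G.Adj x.1.1 y.1.1 ∧ s(x.1.1, y.1.1) ∉ symmDiff x.1.2 y.1.2
  symm := ⟨by
    rintro x y ⟨h1, h2⟩
    exact ⟨h1.symm, by rw [Sym2.eq_swap, symmDiff_comm]; exact h2⟩⟩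
  loopless := ⟨fun x h => G.irrefl h.1⟩

/-! ### Auxiliary lemmas -/

lemma add_self_zmod2 (x : ZMod 2) : x + x = 0 := by revert x; decide

open Classical in
lemma zpar_symmDiff {α : Type*} [Finite α] (A B : Set α) :
    (((symmDiff A B).ncard : ZMod 2)) = (A.ncard : ZMod 2) + B.ncard := by
  have hA := A.toFinite
  have hB := B.toFinite
  have h1 := Set.ncard_inter_add_ncard_diff_eq_ncard A B hA
  have h2 := Set.ncard_inter_add_ncard_diff_eq_ncard B A hB
  have hc : (A ∩ B).ncard = (B ∩ A).ncard := by rw [Set.inter_comm]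
  rw [Set.symmDiff_def,
    Set.ncard_union_eq disjoint_sdiff_sdiff hA.diff hB.diff, ← h1, ← h2, hc]
  push_cast
  ring_nf
  simp [show (4 : ZMod 2) = 0 from rfl]
  exact Or.inr rfl

open Classical in
lemma zpar_singleton_inter {α : Type*} (a : α) (T : Set α) :
    ((({a} ∩ T : Set α).ncard : ZMod 2)) = if a ∈ T then 1 else 0 := by
  by_cases h : a ∈ T
  · rw [Set.inter_eq_self_of_subset_left (by simpa using h)]
    simp [h]
  · rw [Set.singleton_inter_eq_empty.2 h]
    simp [h]

open Classical in
lemma inter_symmDiff_distrib {α : Type*} (A B C : Set α) :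
    (symmDiff A B) ∩ C = symmDiff (A ∩ C) (B ∩ C) := by
  ext x; simp only [Set.mem_symmDiff, Set.mem_inter_iff]; tauto

open Classical in
lemma exists_walk_toggle [Finite V] {G : SimpleGraph V} {a b : V} (w : G.Walk a b) :
    ∃ F : Set (Sym2 V), F ⊆ G.edgeSet ∧ ∀ v : V,
      ((F ∩ G.incidenceSet v).ncard : ZMod 2)
        = (if v = a then 1 else 0) + (if v = b then 1 else 0) := by
  induction w with
  | nil =>
    refine ⟨∅, by simp, fun v => ?_⟩
    simp only [Set.empty_inter, Set.ncard_empty, Nat.cast_zero]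
    exact (add_self_zmod2 _).symm
  | @cons a c b h w ih =>
    obtain ⟨F', hF'sub, hF'par⟩ := ih
    refine ⟨symmDiff {s(a, c)} F', ?_, fun v => ?_⟩
    · exact le_trans symmDiff_le_sup
        (Set.union_subset (by simp [G.mem_edgeSet.2 h]) hF'sub)
    · rw [inter_symmDiff_distrib, zpar_symmDiff, hF'par v, zpar_singleton_inter]
      have hmem : s(a, c) ∈ G.incidenceSet v ↔ (v = a ∨ v = c) := by
        constructor
        · rintro ⟨-, hv⟩
          simpa [eq_comm] using hv
        · rintro (rfl | rfl)
          · exact (G.mem_incidenceSet v c).2 h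
          · rw [Sym2.eq_swap]; exact (G.mem_incidenceSet v a).2 h.symm
      have hac : a ≠ c := h.ne
      simp only [hmem]
      by_cases h1 : v = a <;> by_cases h2 : v = c
      · subst h1; exact absurd h2 hac
      · simp [h1, h2, hac, Ne.symm hac]
      · simp [h1, h2, hac, Ne.symm hac]
        linear_combination add_self_zmod2 1
      · simp [h1, h2, hac, Ne.symm hac]

open Classical in
lemma exists_tjoin [Finite V] {G : SimpleGraph V} (hG : G.Connected)
    (T : Set V) (hT : (T.ncard : ZMod 2) = 0) :
    ∃ F : Set (Sym2 V), F ⊆ G.edgeSet ∧ ∀ v : V,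
      ((F ∩ G.incidenceSet v).ncard : ZMod 2) = if v ∈ T then 1 else 0 := by
  suffices H : ∀ n (T : Set V), T.ncard = n → (T.ncard : ZMod 2) = 0 →
      ∃ F : Set (Sym2 V), F ⊆ G.edgeSet ∧ ∀ v : V,
        ((F ∩ G.incidenceSet v).ncard : ZMod 2) = if v ∈ T then 1 else 0 from
    H T.ncard T rfl hT
  intro n
  induction n using Nat.strong_induction_on with
  | _ n ih =>
    intro T hn hT
    rcases Set.eq_empty_or_nonempty T with rfl | ⟨a, ha⟩
    · exact ⟨∅, by simp, fun v => by simp⟩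
    · have hb : ∃ b ∈ T, b ≠ a := by
        by_contra hc
        push_neg at hc
        have hTa : T = {a} := Set.eq_singleton_iff_unique_mem.2 ⟨ha, hc⟩
        rw [hTa, Set.ncard_singleton] at hT
        exact absurd hT (by decide)
      obtain ⟨b, hbT, hba⟩ := hb
      have hab : a ≠ b := hba.symm
      have hsub : ({a, b} : Set V) ⊆ T := by
        rintro x (rfl | rfl)
        · exact ha
        · exact hbT
      have h2n : 2 ≤ T.ncard := by
        have := Set.ncard_le_ncard hsub T.toFinite
        rwa [Set.ncard_pair hab] at this
      set T' := T \ {a, b} with hT'def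
      have hn' : T'.ncard = T.ncard - 2 := by
        rw [hT'def, Set.ncard_diff hsub, Set.ncard_pair hab]
      have hT'par : (T'.ncard : ZMod 2) = 0 := by
        rw [hn', Nat.cast_sub h2n, hT]
        decide
      obtain ⟨F', hF'sub, hF'par⟩ :=
        ih (T.ncard - 2) (by omega) T' (by rw [hn', hn]) hT'par
      obtain ⟨w⟩ := hG.preconnected a b
      obtain ⟨W, hWsub, hWpar⟩ := exists_walk_toggle w
      refine ⟨symmDiff W F', le_trans symmDiff_le_sup (Set.union_subset hWsub hF'sub),
        fun v => ?_⟩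
      rw [inter_symmDiff_distrib, zpar_symmDiff, hWpar v, hF'par v]
      by_cases h1 : v = a
      · subst h1
        simp [hT'def, ha, hab]
      · by_cases h2 : v = b
        · subst h2
          simp [hT'def, hbT, hba, Ne.symm hba]
        · simp [hT'def, h1, h2]

open Classical in
/-- Toggling the edge label set by a fixed edge set `F` whose incidence parities match the
difference between `W` and `W'` maps `ParityVert G W` to `ParityVert G W'`. -/
noncomputable def toggleMap [Finite V] (G : SimpleGraph V) (W W' : Set V) (F : Set (Sym2 V))
    (hk : ∀ v : V, ((F ∩ G.incidenceSet v).ncard : ZMod 2) + (if v ∈ W then 1 else 0)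
      = (if v ∈ W' then 1 else 0)) :
    ParityVert G W → ParityVert G W' := fun x =>
  ⟨(x.1.1, symmDiff x.1.2 (F ∩ G.incidenceSet x.1.1)),
    le_trans symmDiff_le_sup (Set.union_subset x.2.1 Set.inter_subset_right), by
      refine (ZMod.natCast_eq_natCast_iff' _ _ 2).1 ?_
      rw [zpar_symmDiff, zpar_singleton_inter]
      have hx := (ZMod.natCast_eq_natCast_iff' _ _ 2).2 x.2.2
      rw [zpar_singleton_inter] at hx
      rw [hx]
      linear_combination hk x.1.1⟩

/-- For a connected finite simple graph `G`, if `U, U' ⊆ V(G)` have the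
same parity, then `G_U ≅ G_{U'}`. -/
theorem parityGraph_iso_of_parity [Fintype V] (G : SimpleGraph V) (hG : G.Connected)
    (U U' : Set V) (h : U.ncard % 2 = U'.ncard % 2) :
    Nonempty (parityGraph G U ≃g parityGraph G U') := by
  classical
  set T : Set V := symmDiff U U' with hTdef
  have hT : (T.ncard : ZMod 2) = 0 := by
    rw [hTdef, zpar_symmDiff, (ZMod.natCast_eq_natCast_iff' _ _ 2).2 h]
    exact add_self_zmod2 _
  obtain ⟨F, hFsub, hFpar⟩ := exists_tjoin hG T hT
  have hind : ∀ v, (if v ∈ T then (1 : ZMod 2) else 0)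
      = (if v ∈ U then 1 else 0) + (if v ∈ U' then 1 else 0) := by
    intro v
    by_cases h1 : v ∈ U <;> by_cases h2 : v ∈ U' <;>
      simp [hTdef, Set.mem_symmDiff, h1, h2] <;> decide
  have hkey : ∀ v : V, ((F ∩ G.incidenceSet v).ncard : ZMod 2) + (if v ∈ U then 1 else 0)
      = (if v ∈ U' then 1 else 0) := by
    intro v
    rw [hFpar v, hind v]
    linear_combination add_self_zmod2 (if v ∈ U then (1 : ZMod 2) else 0)
  have hkey' : ∀ v : V, ((F ∩ G.incidenceSet v).ncard : ZMod 2) + (if v ∈ U' then 1 else 0)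
      = (if v ∈ U then 1 else 0) := by
    intro v
    rw [hFpar v, hind v]
    linear_combination add_self_zmod2 (if v ∈ U' then (1 : ZMod 2) else 0)
  refine ⟨⟨Equiv.mk (toggleMap G U U' F hkey) (toggleMap G U' U F hkey') ?_ ?_, ?_⟩⟩
  · intro x
    apply Subtype.ext
    show (x.1.1, symmDiff (symmDiff x.1.2 (F ∩ G.incidenceSet x.1.1))
      (F ∩ G.incidenceSet x.1.1)) = x.1
    rw [symmDiff_symmDiff_cancel_right]
  · intro x
    apply Subtype.ext
    show (x.1.1, symmDiff (symmDiff x.1.2 (F ∩ G.incidenceSet x.1.1))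
      (F ∩ G.incidenceSet x.1.1)) = x.1
    rw [symmDiff_symmDiff_cancel_right]
  · intro x y
    show (_ ∧ _) ↔ (_ ∧ _)
    apply and_congr_right
    intro hadj
    apply not_congr
    have h1 : s(x.1.1, y.1.1) ∈ G.incidenceSet x.1.1 := (G.mem_incidenceSet _ _).2 hadj
    have h2 : s(x.1.1, y.1.1) ∈ G.incidenceSet y.1.1 := by
      rw [Sym2.eq_swap]; exact (G.mem_incidenceSet _ _).2 hadj.symm
    change s(x.1.1, y.1.1) ∈ symmDiff (toggleMap G U U' F hkey x).1.2
      (toggleMap G U U' F hkey y).1.2 ↔ _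
    simp only [toggleMap, Equiv.coe_fn_mk, Set.mem_symmDiff, Set.mem_inter_iff, h1, h2,
      and_true]
    tauto
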